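/- Suppose g^{μν} p_μ p_ν = m² identically on ℝ⁴ with m > 0, and let x : I → ℝ⁴ be an integral curve of p^μ/m, i.e. dx^μ/ds = p^μ(x(s))/m. Then x satisfies the Lorentz force equation d²x^λ/ds² + Γ^λ_{μν}(x) (dx^μ/ds)(dx^ν/ds) = (q/m) g^{λγ} F_{γν} dx^ν/ds for every λ, and s is the proper-time parametrization: g_{μν}(x(s)) (dx^μ/ds)(dx^ν/ds) = 1 for all s. -/

import Mathlib

open scoped BigOperators

/-- Partial derivative in the μ-th coordinate direction. -/
noncomputable def pd {ι : Type*} [Fintype ι] [DecidableEq ι] {F : Type*}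
    [NormedAddCommGroup F] [NormedSpace ℝ F]
    (f : (ι → ℝ) → F) (μ : ι) (x : ι → ℝ) : F :=
  fderiv ℝ f x (Pi.single μ 1)

/-- Christoffel symbols Γ[h]^l_{μν} of a matrix field `h`. -/
noncomputable def Chr {ι : Type*} [Fintype ι] [DecidableEq ι]
    (h : (ι → ℝ) → Matrix ι ι ℝ) (l μ ν : ι) (x : ι → ℝ) : ℝ :=
  (1/2) * ∑ ρ : ι, (h x)⁻¹ l ρ *
    (pd (fun z => h z ρ ν) μ x + pd (fun z => h z ρ μ) ν x - pd (fun z => h z μ ν) ρ x)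

/-- Electromagnetic field tensor F_{μν} = ∂_μ A_ν − ∂_ν A_μ. -/
noncomputable def Fem (A : (Fin 4 → ℝ) → Fin 4 → ℝ) (μ ν : Fin 4) (x : Fin 4 → ℝ) : ℝ :=
  pd (fun z => A z ν) μ x - pd (fun z => A z μ) ν x

/-- Kinematical momentum p_μ = ∂_μ S − q A_μ. -/
noncomputable def pDown (S : (Fin 4 → ℝ) → ℝ) (A : (Fin 4 → ℝ) → Fin 4 → ℝ) (q : ℝ)
    (μ : Fin 4) (x : Fin 4 → ℝ) : ℝ :=
  pd S μ x - q * A x μ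

/-- Kinematical momentum with index raised: p^μ = g^{μν} p_ν. -/
noncomputable def pUp (g : (Fin 4 → ℝ) → Matrix (Fin 4) (Fin 4) ℝ)
    (S : (Fin 4 → ℝ) → ℝ) (A : (Fin 4 → ℝ) → Fin 4 → ℝ) (q : ℝ)
    (μ : Fin 4) (x : Fin 4 → ℝ) : ℝ :=
  ∑ ν : Fin 4, (g x)⁻¹ μ ν * pDown S A q ν x

namespace LF

abbrev E := Fin 4 → ℝ
abbrev sm (f : E → ℝ) := ContDiff ℝ (⊤ : ℕ∞) f

lemma one_le_top : (1 : WithTop ℕ∞) ≤ ((⊤:ℕ∞) : WithTop ℕ∞) := by exact_mod_cast le_top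
lemma top_add_one_le : ((⊤:ℕ∞) : WithTop ℕ∞) + 1 ≤ ((⊤:ℕ∞) : WithTop ℕ∞) := by norm_cast

lemma sm.dAt {f : E → ℝ} (hf : sm f) {x : E} : DifferentiableAt ℝ f x :=
  (hf.differentiable (by simp)).differentiableAt

lemma pd_contDiff {f : E → ℝ} (hf : sm f) (μ : Fin 4) : sm (pd f μ) :=
  (hf.fderiv_right (m := (⊤:ℕ∞)) top_add_one_le).clm_apply contDiff_const

lemma pd_sub {f g : E → ℝ} {x : E} (hf : DifferentiableAt ℝ f x)
    (hg : DifferentiableAt ℝ g x) (μ : Fin 4) :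
    pd (fun z => f z - g z) μ x = pd f μ x - pd g μ x := by
  simp [pd, fderiv_fun_sub hf hg]

lemma pd_mul {f g : E → ℝ} {x : E} (hf : DifferentiableAt ℝ f x)
    (hg : DifferentiableAt ℝ g x) (μ : Fin 4) :
    pd (fun z => f z * g z) μ x = pd f μ x * g x + f x * pd g μ x := by
  simp [pd, fderiv_fun_mul hf hg]; ring

lemma pd_const (c : ℝ) (μ : Fin 4) (x : E) : pd (fun _ : E => c) μ x = 0 := by simp [pd]

lemma pd_const_mul {f : E → ℝ} {x : E} (hf : DifferentiableAt ℝ f x) (c : ℝ) (μ : Fin 4) :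
    pd (fun z => c * f z) μ x = c * pd f μ x := by
  simp [pd, fderiv_const_mul hf]

lemma pd_sum {f : Fin 4 → E → ℝ} {x : E} (hf : ∀ i, DifferentiableAt ℝ (f i) x) (μ : Fin 4) :
    pd (fun z => ∑ i : Fin 4, f i z) μ x = ∑ i : Fin 4, pd (f i) μ x := by
  simp [pd, fderiv_fun_sum (fun i _ => hf i)]

lemma pd_mul3 {f1 f2 f3 : E → ℝ} {y : E} (h1 : sm f1) (h2 : sm f2) (h3 : sm f3) (ρ : Fin 4) :
    pd (fun z => f1 z * f2 z * f3 z) ρ y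
      = (pd f1 ρ y * f2 y + f1 y * pd f2 ρ y) * f3 y + f1 y * f2 y * pd f3 ρ y := by
  have d12 : DifferentiableAt ℝ (fun z => f1 z * f2 z) y := h1.dAt.mul h2.dAt
  calc pd (fun z => f1 z * f2 z * f3 z) ρ y
      = pd (fun z => f1 z * f2 z) ρ y * f3 y + (f1 y * f2 y) * pd f3 ρ y :=
        pd_mul d12 h3.dAt ρ
    _ = _ := by rw [pd_mul h1.dAt h2.dAt]

-- chain rule along a curve
lemma hasDerivAt_comp_curve {f : E → ℝ} (hf : sm f) {x : ℝ → E} {v : Fin 4 → ℝ} {s : ℝ}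
    (hx : ∀ μ, HasDerivAt (fun u => x u μ) (v μ) s) :
    HasDerivAt (fun u => f (x u)) (∑ μ : Fin 4, pd f μ (x s) * v μ) s := by
  have hx' : HasDerivAt x v s := hasDerivAt_pi.2 hx
  have h := hf.dAt.hasFDerivAt.comp_hasDerivAt s hx'
  refine h.congr_deriv ?_
  symm
  have hv : v = ∑ μ : Fin 4, v μ • (Pi.single μ (1:ℝ) : E) := by
    ext j; simp [Pi.single_apply, Finset.sum_apply, eq_comm]
  conv_rhs => rw [hv, map_sum]
  simp [pd, mul_comm]

-- Clairaut
lemma pd_pd_comm {f : E → ℝ} (hf : sm f) (μ ν : Fin 4) (x : E) :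
    pd (fun z => pd f ν z) μ x = pd (fun z => pd f μ z) ν x := by
  have hd' : ∀ y : E, HasFDerivAt f (fderiv ℝ f y) y := fun y =>
    ((hf.differentiable (by simp)) y).hasFDerivAt
  have hd2 : DifferentiableAt ℝ (fderiv ℝ f) x :=
    ((hf.fderiv_right (m := (⊤:ℕ∞)) top_add_one_le).differentiable (by simp)).differentiableAt
  have hsym := second_derivative_symmetric hd' hd2.hasFDerivAt
      (Pi.single μ (1:ℝ)) (Pi.single ν (1:ℝ))
  have key : ∀ a b : Fin 4, pd (fun z => pd f b z) a x
      = fderiv ℝ (fderiv ℝ f) x (Pi.single a (1:ℝ)) (Pi.single b (1:ℝ)) := by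
    intro a b
    have : (fun z : E => pd f b z)
        = fun z => (fderiv ℝ f z) ((fun _ : E => (Pi.single b (1:ℝ) : E)) z) := rfl
    rw [pd, this, fderiv_clm_apply hd2 (differentiableAt_const _)]
    simp
  rw [key, key]
  exact hsym

lemma sm_det {M : E → Matrix (Fin 4) (Fin 4) ℝ} (hM : ∀ i j, sm (fun x => M x i j)) :
    sm (fun x => (M x).det) := by
  have : (fun x => (M x).det)
      = fun x => ∑ σ : Equiv.Perm (Fin 4), (Equiv.Perm.sign σ : ℝ) * ∏ i, M x (σ i) i := by
    funext x; rw [Matrix.det_apply']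
  rw [this]
  exact ContDiff.sum fun σ _ => (contDiff_const.mul (contDiff_prod fun i _ => hM (σ i) i))

lemma sm_inv_entry {g : E → Matrix (Fin 4) (Fin 4) ℝ}
    (hg : ∀ i j, sm (fun x => g x i j)) (hginv : ∀ x, IsUnit (g x).det) (i j : Fin 4) :
    sm (fun x => (g x)⁻¹ i j) := by
  have hdet : sm (fun x => (g x).det) := sm_det hg
  have hne : ∀ x : E, (g x).det ≠ 0 := fun x => (hginv x).ne_zero
  have hadj : sm (fun x => (g x).adjugate i j) := by
    have : (fun x => (g x).adjugate i j)
        = fun x => ((g x).updateRow j (Pi.single i 1)).det := by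
      funext x; rw [Matrix.adjugate_apply]
    rw [this]
    apply sm_det
    intro a b
    by_cases hab : a = j
    · subst hab; simp only [Matrix.updateRow_self]; exact contDiff_const
    · simp only [Matrix.updateRow_ne hab]; exact hg a b
  have : (fun x => (g x)⁻¹ i j) = fun x => ((g x).det)⁻¹ * (g x).adjugate i j := by
    funext x
    rw [Matrix.inv_def, Ring.inverse_eq_inv']
    simp [Matrix.smul_apply]
  rw [this]
  exact (hdet.inv hne).mul hadj

lemma pd_inv_entry {g : E → Matrix (Fin 4) (Fin 4) ℝ}
    (hg : ∀ i j, sm (fun x => g x i j)) (hginv : ∀ x, IsUnit (g x).det)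
    (μ : Fin 4) (i j : Fin 4) (x : E) :
    pd (fun z => (g z)⁻¹ i j) μ x
      = - ∑ k : Fin 4, ∑ l : Fin 4,
          (g x)⁻¹ i k * pd (fun z => g z k l) μ x * (g x)⁻¹ l j := by
  have hgi : ∀ i j, sm (fun x => (g x)⁻¹ i j) := sm_inv_entry hg hginv
  have hconst : ∀ l : Fin 4, ∀ z : E,
      ∑ k : Fin 4, (g z)⁻¹ i k * g z k l = (1 : Matrix (Fin 4) (Fin 4) ℝ) i l := by
    intro l z
    rw [← Matrix.nonsing_inv_mul (g z) (hginv z)]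
    simp [Matrix.mul_apply]
  have hpd0 : ∀ l : Fin 4,
      ∑ k : Fin 4, (pd (fun z => (g z)⁻¹ i k) μ x * g x k l
        + (g x)⁻¹ i k * pd (fun z => g z k l) μ x) = 0 := by
    intro l
    have h1 : pd (fun z => ∑ k : Fin 4, (g z)⁻¹ i k * g z k l) μ x = 0 := by
      have : (fun z => ∑ k : Fin 4, (g z)⁻¹ i k * g z k l)
          = fun _ => (1 : Matrix (Fin 4) (Fin 4) ℝ) i l := funext fun z => hconst l z
      rw [this, pd_const]
    rw [pd_sum (fun k => sm.dAt ((hgi i k).mul (hg k l)))] at h1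
    rw [← h1]
    exact Finset.sum_congr rfl fun k _ => (pd_mul (hgi i k).dAt (hg k l).dAt μ).symm
  have key : ∀ l : Fin 4,
      ∑ k, pd (fun z => (g z)⁻¹ i k) μ x * g x k l
        = - ∑ k, (g x)⁻¹ i k * pd (fun z => g z k l) μ x := by
    intro l
    have := hpd0 l
    rw [Finset.sum_add_distrib] at this
    linarith
  have hGi : ∀ k j', ∑ l, g x k l * (g x)⁻¹ l j' = (1 : Matrix (Fin 4) (Fin 4) ℝ) k j' := by
    intro k j'
    rw [← Matrix.mul_nonsing_inv (g x) (hginv x)]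
    simp [Matrix.mul_apply]
  calc pd (fun z => (g z)⁻¹ i j) μ x
      = ∑ k, pd (fun z => (g z)⁻¹ i k) μ x * (1 : Matrix (Fin 4) (Fin 4) ℝ) k j := by
        simp [Matrix.one_apply]
    _ = ∑ k, pd (fun z => (g z)⁻¹ i k) μ x * ∑ l, g x k l * (g x)⁻¹ l j := by
        simp_rw [hGi]
    _ = ∑ l, (∑ k, pd (fun z => (g z)⁻¹ i k) μ x * g x k l) * (g x)⁻¹ l j := by
        simp_rw [Finset.mul_sum, Finset.sum_mul]
        rw [Finset.sum_comm]
        apply Finset.sum_congr rfl; intro k _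
        apply Finset.sum_congr rfl; intro l _
        ring
    _ = ∑ l, (- ∑ k, (g x)⁻¹ i k * pd (fun z => g z k l) μ x) * (g x)⁻¹ l j := by
        simp_rw [key]
    _ = - ∑ k, ∑ l, (g x)⁻¹ i k * pd (fun z => g z k l) μ x * (g x)⁻¹ l j := by
        simp only [neg_mul, Finset.sum_mul, ← Finset.sum_neg_distrib]
        exact Finset.sum_comm

set_option maxHeartbeats 4000000 in
lemma keyL (B : Matrix (Fin 4) (Fin 4) ℝ) (hB : ∀ i j, B j i = B i j)
    (D : Fin 4 → Fin 4 → Fin 4 → ℝ) (H Ad : Fin 4 → Fin 4 → ℝ)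
    (hH : ∀ μ ν, H ν μ = H μ ν) (p : Fin 4 → ℝ) (q : ℝ) (l : Fin 4)
    (hms : ∀ ρ : Fin 4, ∑ μ : Fin 4, ∑ ν : Fin 4,
      (((-∑ k : Fin 4, ∑ r : Fin 4, B μ k * D ρ k r * B r ν) * p μ
          + B μ ν * (H ρ μ - q * Ad ρ μ)) * p ν
        + B μ ν * p μ * (H ρ ν - q * Ad ρ ν)) = 0) :
    ∑ μ : Fin 4, (∑ ν : Fin 4, ((-∑ k : Fin 4, ∑ r : Fin 4, B l k * D μ k r * B r ν) * p ν
        + B l ν * (H μ ν - q * Ad μ ν))) * (∑ ν : Fin 4, B μ ν * p ν)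
    + ∑ μ : Fin 4, ∑ ν : Fin 4,
        ((1/2) * ∑ ρ : Fin 4, B l ρ * (D μ ρ ν + D ν ρ μ - D ρ μ ν))
          * (∑ a : Fin 4, B μ a * p a) * (∑ b : Fin 4, B ν b * p b)
    = q * ∑ γ : Fin 4, B l γ * ∑ ν : Fin 4,
        (Ad γ ν - Ad ν γ) * (∑ b : Fin 4, B ν b * p b) := by
  have h0 := hms 0; have h1 := hms 1; have h2 := hms 2; have h3 := hms 3
  simp only [Fin.sum_univ_four] at h0 h1 h2 h3 ⊢
  simp only [hB 0 1, hB 0 2, hB 0 3, hB 1 2, hB 1 3, hB 2 3,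
    hH 0 1, hH 0 2, hH 0 3, hH 1 2, hH 1 3, hH 2 3] at h0 h1 h2 h3 ⊢
  linear_combination (B l 0 / 2) * h0 + (B l 1 / 2) * h1
    + (B l 2 / 2) * h2 + (B l 3 / 2) * h3

end LF

set_option maxHeartbeats 4000000 in
/-- if g^{μν} p_μ p_ν = m² with m > 0, then integral curves of p^μ/m satisfy
the Lorentz force equation with charge-to-mass ratio q/m, and are parametrized by proper
time: g_{μν} ẋ^μ ẋ^ν = 1. -/
theorem integral_curve_lorentz_force
    (g : (Fin 4 → ℝ) → Matrix (Fin 4) (Fin 4) ℝ)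
    (S : (Fin 4 → ℝ) → ℝ) (A : (Fin 4 → ℝ) → Fin 4 → ℝ) (q : ℝ)
    (hg : ∀ μ ν, ContDiff ℝ (⊤ : ℕ∞) (fun x => g x μ ν))
    (hgsymm : ∀ x, (g x).IsSymm)
    (hginv : ∀ x, IsUnit (g x).det)
    (hS : ContDiff ℝ (⊤ : ℕ∞) S)
    (hA : ∀ μ, ContDiff ℝ (⊤ : ℕ∞) (fun x => A x μ))
    (m : ℝ) (hm : 0 < m)
    (hmass : ∀ x : Fin 4 → ℝ,
      ∑ μ : Fin 4, ∑ ν : Fin 4, (g x)⁻¹ μ ν * pDown S A q μ x * pDown S A q ν x = m^2)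
    (I : Set ℝ) (hI : IsOpen I) (hIconn : I.OrdConnected)
    (x : ℝ → Fin 4 → ℝ)
    -- x is an integral curve of p^μ/m
    (hint : ∀ s ∈ I, ∀ μ : Fin 4,
      HasDerivAt (fun u => x u μ) (pUp g S A q μ (x s) / m) s) :
    ∀ s ∈ I,
      (∀ l : Fin 4,
        deriv (fun u => deriv (fun w => x w l) u) s
          + ∑ μ : Fin 4, ∑ ν : Fin 4, Chr g l μ ν (x s)
              * deriv (fun w => x w μ) s * deriv (fun w => x w ν) s
        = (q / m) * ∑ γ : Fin 4, (g (x s))⁻¹ l γ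
              * ∑ ν : Fin 4, Fem A γ ν (x s) * deriv (fun w => x w ν) s) ∧
      (∑ μ : Fin 4, ∑ ν : Fin 4, g (x s) μ ν
          * deriv (fun w => x w μ) s * deriv (fun w => x w ν) s = 1) := by
  intro s hs
  classical
  set y : Fin 4 → ℝ := x s with hy
  -- smoothness facts
  have hP : ∀ μ, LF.sm (pDown S A q μ) := fun μ =>
    ((LF.pd_contDiff hS μ).sub (contDiff_const.mul (hA μ)))
  have hB : ∀ i j, LF.sm (fun z => (g z)⁻¹ i j) := LF.sm_inv_entry hg hginv
  have hU : ∀ l, LF.sm (pUp g S A q l) := fun l =>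
    ContDiff.sum fun ν _ => (hB l ν).mul (hP ν)
  -- derivative of the coordinates
  have hderiv : ∀ μ, deriv (fun w => x w μ) s = pUp g S A q μ y / m := fun μ =>
    (hint s hs μ).deriv
  -- symmetry facts
  have hBsymm : ∀ i j, (g y)⁻¹ j i = (g y)⁻¹ i j := by
    intro i j
    have h1 : ((g y)⁻¹).IsSymm := by
      unfold Matrix.IsSymm
      rw [Matrix.transpose_nonsing_inv, (hgsymm y).eq]
    exact h1.apply i j
  have hHsymm : ∀ μ ν, pd (fun z => pd S ν z) μ y = pd (fun z => pd S μ z) ν y :=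
    fun μ ν => LF.pd_pd_comm hS μ ν y
  -- expansion of pd of pDown
  have hdP : ∀ μ ν, pd (pDown S A q ν) μ y
      = pd (fun z => pd S ν z) μ y - q * pd (fun z => A z ν) μ y := by
    intro μ ν
    have : pDown S A q ν = fun z => pd S ν z - q * A z ν := rfl
    rw [this, LF.pd_sub (LF.sm.dAt (LF.pd_contDiff hS ν)) (LF.sm.dAt (contDiff_const.mul (hA ν))),
      LF.pd_const_mul (LF.sm.dAt (hA ν))]
  -- expansion of pd of pUp
  have hpdU : ∀ μ l, pd (pUp g S A q l) μ y
      = ∑ ν : Fin 4, (pd (fun z => (g z)⁻¹ l ν) μ y * pDown S A q ν y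
          + (g y)⁻¹ l ν * pd (pDown S A q ν) μ y) := by
    intro μ l
    have : pUp g S A q l = fun z => ∑ ν : Fin 4, (g z)⁻¹ l ν * pDown S A q ν z := rfl
    rw [this, LF.pd_sum (fun ν => LF.sm.dAt ((hB l ν).mul (hP ν)))]
    exact Finset.sum_congr rfl fun ν _ => LF.pd_mul (LF.sm.dAt (hB l ν)) (LF.sm.dAt (hP ν)) μ
  -- pd of inverse metric entries
  have hDinv : ∀ μ i j, pd (fun z => (g z)⁻¹ i j) μ y
      = - ∑ k : Fin 4, ∑ r : Fin 4,
          (g y)⁻¹ i k * pd (fun z => g z k r) μ y * (g y)⁻¹ r j :=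
    fun μ i j => LF.pd_inv_entry hg hginv μ i j y
  -- differentiated mass-shell relation
  have hms : ∀ ρ : Fin 4,
      ∑ μ : Fin 4, ∑ ν : Fin 4,
        ((pd (fun z => (g z)⁻¹ μ ν) ρ y * pDown S A q μ y
            + (g y)⁻¹ μ ν * pd (pDown S A q μ) ρ y) * pDown S A q ν y
          + (g y)⁻¹ μ ν * pDown S A q μ y * pd (pDown S A q ν) ρ y) = 0 := by
    intro ρ
    have hc : (fun z => ∑ μ : Fin 4, ∑ ν : Fin 4,
        (g z)⁻¹ μ ν * pDown S A q μ z * pDown S A q ν z) = fun _ => m^2 := funext hmass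
    have h0 : pd (fun z => ∑ μ : Fin 4, ∑ ν : Fin 4,
        (g z)⁻¹ μ ν * pDown S A q μ z * pDown S A q ν z) ρ y = 0 := by
      rw [hc, LF.pd_const]
    rw [LF.pd_sum (fun μ => LF.sm.dAt (ContDiff.sum fun ν _ =>
      ((hB μ ν).mul (hP μ)).mul (hP ν)))] at h0
    rw [← h0]
    refine (Finset.sum_congr rfl fun μ _ => ?_).symm
    rw [LF.pd_sum (fun ν => LF.sm.dAt (((hB μ ν).mul (hP μ)).mul (hP ν)))]
    exact Finset.sum_congr rfl fun ν _ => LF.pd_mul3 (hB μ ν) (hP μ) (hP ν) ρ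
  -- inverse relation of the metric at y
  have hgB : ∀ μ b, ∑ ν : Fin 4, g y μ ν * (g y)⁻¹ ν b
      = (1 : Matrix (Fin 4) (Fin 4) ℝ) μ b := by
    intro μ b
    rw [← Matrix.mul_nonsing_inv (g y) (hginv y)]
    simp [Matrix.mul_apply]
  constructor
  · -- Lorentz force equation
    intro l
    -- second derivative identification
    have hev : (fun u => deriv (fun w => x w l) u) =ᶠ[nhds s]
        (fun u => pUp g S A q l (x u) / m) := by
      filter_upwards [hI.mem_nhds hs] with u hu
      exact (hint u hu l).deriv
    have hDD : HasDerivAt (fun u => pUp g S A q l (x u) / m)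
        ((∑ μ : Fin 4, pd (pUp g S A q l) μ y * (pUp g S A q μ y / m)) / m) s :=
      (LF.hasDerivAt_comp_curve (hU l) (fun μ => hint s hs μ)).div_const m
    have h2nd : deriv (fun u => deriv (fun w => x w l) u) s
        = (∑ μ : Fin 4, pd (pUp g S A q l) μ y * (pUp g S A q μ y / m)) / m := by
      rw [hev.deriv_eq]
      exact hDD.deriv
    rw [h2nd]
    simp only [hderiv]
    simp only [hpdU, hDinv, hdP, Chr, Fem, pUp]
    have hms' := hms
    simp only [hDinv, hdP] at hms'
    have key := LF.keyL (g y)⁻¹ hBsymm (fun ρ k r => pd (fun z => g z k r) ρ y)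
        (fun a b => pd (fun z => pd S b z) a y) (fun a b => pd (fun z => A z b) a y)
        (fun μ ν => (hHsymm μ ν).symm) (fun μ => pDown S A q μ y) q l hms'
    simp only [Fin.sum_univ_four] at key ⊢
    linear_combination (1/m^2) * key
  · -- proper time
    have hE : ∀ μ, ∑ ν : Fin 4, g y μ ν * pUp g S A q ν y = pDown S A q μ y := by
      intro μ
      calc ∑ ν : Fin 4, g y μ ν * pUp g S A q ν y
          = ∑ b : Fin 4, (∑ ν : Fin 4, g y μ ν * (g y)⁻¹ ν b) * pDown S A q b y := by
            simp only [pUp, Finset.mul_sum, Finset.sum_mul]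
            rw [Finset.sum_comm]
            exact Finset.sum_congr rfl fun ν _ => Finset.sum_congr rfl fun b _ => by ring
        _ = ∑ b : Fin 4, (1 : Matrix (Fin 4) (Fin 4) ℝ) μ b * pDown S A q b y := by
            simp_rw [hgB]
        _ = pDown S A q μ y := by simp [Matrix.one_apply]
    have hm2 := hmass y
    simp only [hderiv]
    have hmne : m ≠ 0 := ne_of_gt hm
    have hE' := hE
    have hu : ∀ μ, pUp g S A q μ y = ∑ ν : Fin 4, (g y)⁻¹ μ ν * pDown S A q ν y :=
      fun μ => rfl
    have key2 : ∑ μ : Fin 4, ∑ ν : Fin 4, g y μ ν * pUp g S A q μ y * pUp g S A q ν y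
        = m ^ 2 := by
      simp only [Fin.sum_univ_four] at hE' hm2 hu ⊢
      linear_combination (pUp g S A q 0 y * hE' 0 + pUp g S A q 1 y * hE' 1
        + pUp g S A q 2 y * hE' 2 + pUp g S A q 3 y * hE' 3
        + pDown S A q 0 y * hu 0 + pDown S A q 1 y * hu 1
        + pDown S A q 2 y * hu 2 + pDown S A q 3 y * hu 3 + hm2)
    simp only [Fin.sum_univ_four] at key2 ⊢
    field_simp
    linear_combination key2
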